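/- Let π ∈ NC(n) and let 𝔐 be a set of blocks of π containing all the outer blocks of π. Then there exists a unique block-projection Φ : π → π with Ran(Φ) = 𝔐. -/
import Mathlib


open Finset

/-- Partitions of `{1,...,n}`, modelled as finpartitions of `Fin n`. -/
abbrev NCPart (n : ℕ) := Finpartition (Finset.univ : Finset (Fin n))

/-- `i` and `j` lie in the same block of `π`. -/
def SameBlock {n : ℕ} (π : NCPart n) (i j : Fin n) : Prop :=
  ∃ B ∈ π.parts, i ∈ B ∧ j ∈ B

/-- `π` is a non-crossing partition. -/
def IsNoncrossing {n : ℕ} (π : NCPart n) : Prop :=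
  ∀ i1 i2 i3 i4 : Fin n, i1 < i2 → i2 < i3 → i3 < i4 →
    SameBlock π i1 i3 → SameBlock π i2 i4 → SameBlock π i1 i2

/-- `π` is an interval partition: every block is an integer interval. -/
def IsIntervalPart {n : ℕ} (π : NCPart n) : Prop :=
  ∀ B ∈ π.parts, ∃ i j : Fin n, i ≤ j ∧ B = Finset.Icc i j

/-- The nesting order: `V ⊑ W` iff `min W ≤ min V` and `max V ≤ max W`. -/
def Nested {n : ℕ} (V W : Finset (Fin n)) : Prop :=
  W.min ≤ V.min ∧ V.max ≤ W.max

def StrictNested {n : ℕ} (V W : Finset (Fin n)) : Prop :=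
  Nested V W ∧ V ≠ W

/-- An outer block: a block maximal with respect to the nesting order. -/
def IsOuter {n : ℕ} (π : NCPart n) (W : Finset (Fin n)) : Prop :=
  W ∈ π.parts ∧ ∀ V ∈ π.parts, Nested W V → V = W

/-- `P` is the parent block of `V` in `π`. -/
def IsParent {n : ℕ} (π : NCPart n) (V P : Finset (Fin n)) : Prop :=
  P ∈ π.parts ∧ StrictNested V P ∧
    ¬ ∃ V' ∈ π.parts, StrictNested V V' ∧ StrictNested V' P

/-- `π` refines `ρ`: every block of `ρ` is a union of blocks of `π`. -/
def Refines {n : ℕ} (π ρ : NCPart n) : Prop :=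
  ∀ B ∈ π.parts, ∃ C ∈ ρ.parts, B ⊆ C

/-- The partial order `π ≪ ρ`. -/
def LL {n : ℕ} (π ρ : NCPart n) : Prop :=
  Refines π ρ ∧ ∀ W ∈ ρ.parts, ∃ V ∈ π.parts, V ⊆ W ∧ V.min = W.min ∧ V.max = W.max

/-- The colouring `c` is constant on every block of `π`. -/
def MonoChrome {n s : ℕ} (c : Fin n → Fin s) (π : NCPart n) : Prop :=
  ∀ B ∈ π.parts, ∀ i ∈ B, ∀ j ∈ B, c i = c j

/-- Vertical no-repeat property: every inner block has colour different from its parent. -/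
def VNRP {n s : ℕ} (c : Fin n → Fin s) (π : NCPart n) : Prop :=
  ∀ V P : Finset (Fin n), V ∈ π.parts → IsParent π V P →
    ∀ i ∈ V, ∀ j ∈ P, c i ≠ c j

/-- The depth of (the block of) `j` in `π`: the number of blocks strictly nesting it. -/
noncomputable def blockDepth {n : ℕ} (π : NCPart n) (j : Fin n) : ℕ :=
  Set.ncard {W : Finset (Fin n) | W ∈ π.parts ∧ ∃ B ∈ π.parts, j ∈ B ∧ StrictNested B W}

/-- `j` is the maximum of an outer block of `π`. -/
def IsOuterMax {n : ℕ} (π : NCPart n) (j : Fin n) : Prop :=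
  ∃ B, IsOuter π B ∧ j ∈ B ∧ ∀ i ∈ B, i ≤ j

/-- `j` is the minimum of an outer block of `π`. -/
def IsOuterMin {n : ℕ} (π : NCPart n) (j : Fin n) : Prop :=
  ∃ B, IsOuter π B ∧ j ∈ B ∧ ∀ i ∈ B, j ≤ i

/-- Anticommutator-friendly partitions of `{1,...,2n}` (0-indexed: odd numbers
`1,3,...,2n-1` correspond to even indices, and `2n` to index `2n-1`). -/
def ACFriendly (n : ℕ) (π : NCPart (2*n)) : Prop :=
  (∀ j : Fin (2*n), IsOuterMax π j → Even (j : ℕ) ∨ (j : ℕ) = 2*n - 1) ∧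
  (∀ j j' : Fin (2*n), Even (j : ℕ) → (j' : ℕ) = (j : ℕ) + 1 → ¬ IsOuterMax π j →
    blockDepth π j ≠ blockDepth π j')

/-- A pairing: every block has exactly two elements. -/
def IsPairing {n : ℕ} (π : NCPart n) : Prop :=
  ∀ B ∈ π.parts, B.card = 2

/-- A block-projection for `π`. -/
structure BlockProjection {n : ℕ} (π : NCPart n) where
  toFun : {B : Finset (Fin n) // B ∈ π.parts} → {B : Finset (Fin n) // B ∈ π.parts}
  idem : ∀ A, toFun (toFun A) = toFun A
  mono : ∀ A B, Nested A.val B.val → Nested (toFun A).val (toFun B).val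
  le_apply : ∀ A, Nested A.val (toFun A).val

namespace BPAux

variable {n : ℕ} {π : NCPart n}

/-- Blocks of `π` as a subtype. -/
abbrev Bl (π : NCPart n) := {B : Finset (Fin n) // B ∈ π.parts}

noncomputable def mn (A : Bl π) : Fin n := A.val.min' (π.nonempty_of_mem_parts A.2)

noncomputable def mx (A : Bl π) : Fin n := A.val.max' (π.nonempty_of_mem_parts A.2)

lemma mn_mem (A : Bl π) : mn A ∈ A.val := Finset.min'_mem _ _

lemma mx_mem (A : Bl π) : mx A ∈ A.val := Finset.max'_mem _ _

lemma mn_le_mx (A : Bl π) : mn A ≤ mx A := Finset.min'_le _ _ (mx_mem A)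

lemma nested_iff (A B : Bl π) :
    Nested A.val B.val ↔ mn B ≤ mn A ∧ mx A ≤ mx B := by
  unfold Nested
  rw [← Finset.coe_min' (π.nonempty_of_mem_parts A.2),
      ← Finset.coe_min' (π.nonempty_of_mem_parts B.2),
      ← Finset.coe_max' (π.nonempty_of_mem_parts A.2),
      ← Finset.coe_max' (π.nonempty_of_mem_parts B.2)]
  exact and_congr WithTop.coe_le_coe WithBot.coe_le_coe

lemma nested_refl (A : Bl π) : Nested A.val A.val := ⟨le_refl _, le_refl _⟩

lemma nested_trans {A B C : Bl π} (h1 : Nested A.val B.val) (h2 : Nested B.val C.val) :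
    Nested A.val C.val := ⟨h2.1.trans h1.1, h1.2.trans h2.2⟩

lemma eq_of_common_mem {A B : Bl π} {a : Fin n} (ha : a ∈ A.val) (hb : a ∈ B.val) : A = B :=
  Subtype.ext (π.eq_of_mem_parts A.2 B.2 ha hb)

lemma eq_of_mn_eq {A B : Bl π} (h : mn A = mn B) : A = B :=
  eq_of_common_mem (mn_mem A) (h ▸ mn_mem B)

lemma nested_antisymm {A B : Bl π} (h1 : Nested A.val B.val) (h2 : Nested B.val A.val) :
    A = B := by
  rw [nested_iff] at h1 h2
  exact eq_of_mn_eq (le_antisymm h2.1 h1.1)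

lemma cross (hπ : IsNoncrossing π) (B C : Bl π) (h1 : mn B ≤ mn C) (h2 : mn C ≤ mx B) :
    Nested C.val B.val ∨ Nested B.val C.val := by
  rcases le_or_gt (mx C) (mx B) with h3 | h3
  · exact Or.inl ((nested_iff C B).2 ⟨h1, h3⟩)
  rcases eq_or_lt_of_le h1 with he | h1'
  · rw [eq_of_mn_eq he]; exact Or.inl (nested_refl C)
  rcases eq_or_lt_of_le h2 with he | h2'
  · have hmem : mn C ∈ B.val := by rw [he]; exact mx_mem B
    rw [eq_of_common_mem (mn_mem C) hmem]; exact Or.inl (nested_refl B)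
  have hs := hπ (mn B) (mn C) (mx B) (mx C) h1' h2' h3
    ⟨B.val, B.2, mn_mem B, mx_mem B⟩ ⟨C.val, C.2, mn_mem C, mx_mem C⟩
  obtain ⟨D, hD, hb, hc⟩ := hs
  have hBC : B = C :=
    (eq_of_common_mem (A := (⟨D, hD⟩ : Bl π)) hb (mn_mem B)).symm.trans
      (eq_of_common_mem (A := (⟨D, hD⟩ : Bl π)) hc (mn_mem C))
  rw [hBC]; exact Or.inl (nested_refl C)

lemma comparable (hπ : IsNoncrossing π) {A B C : Bl π}
    (hAB : Nested A.val B.val) (hAC : Nested A.val C.val) :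
    Nested B.val C.val ∨ Nested C.val B.val := by
  rw [nested_iff] at hAB hAC
  rcases le_total (mn B) (mn C) with h | h
  · exact (cross hπ B C h (hAC.1.trans ((mn_le_mx A).trans hAB.2))).symm
  · exact cross hπ C B h (hAB.1.trans ((mn_le_mx A).trans hAC.2))

lemma exists_outer (A : Bl π) : ∃ W : Bl π, IsOuter π W.val ∧ Nested A.val W.val := by
  classical
  set S : Set (Bl π) := {B | Nested A.val B.val} with hS
  obtain ⟨W, hWS, hWmax⟩ := Set.exists_max_image S
    (fun B => (mx B).val - (mn B).val) (Set.toFinite S) ⟨A, nested_refl A⟩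
  refine ⟨W, ⟨W.2, ?_⟩, hWS⟩
  intro V hV hWV
  set V' : Bl π := ⟨V, hV⟩ with hV'
  have hAV : Nested A.val V'.val := nested_trans hWS hWV
  have hlen := hWmax V' hAV
  have hWV' : Nested W.val V'.val := hWV
  rw [nested_iff] at hWV'
  have e1 : (mn V').val ≤ (mn W).val := hWV'.1
  have e2 : (mx W).val ≤ (mx V').val := hWV'.2
  have e3 : (mn W).val ≤ (mx W).val := mn_le_mx W
  have : V' = W := eq_of_mn_eq (Fin.ext (by omega))
  exact congrArg Subtype.val this

lemma ext' (Φ Ψ : BlockProjection π) (h : Φ.toFun = Ψ.toFun) : Φ = Ψ := by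
  cases Φ; cases Ψ; simp_all

end BPAux

/-- For any set `M` of blocks of a non-crossing partition containing all outer blocks,
there is a unique block-projection with range `M`. -/
theorem blockProjection_existsUnique (n : ℕ) (π : NCPart n) (hπ : IsNoncrossing π)
    (M : Set {B : Finset (Fin n) // B ∈ π.parts})
    (hM : ∀ B : {B : Finset (Fin n) // B ∈ π.parts}, IsOuter π B.val → B ∈ M) :
    ∃! Φ : BlockProjection π, Set.range Φ.toFun = M := by
  classical
  open BPAux in
  have hmin : ∀ A : Bl π, ∃ B0 : Bl π, B0 ∈ M ∧ Nested A.val B0.val ∧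
      ∀ B ∈ M, Nested A.val B.val → Nested B0.val B.val := by
    intro A
    obtain ⟨W, hWo, hAW⟩ := exists_outer A
    set S : Set (Bl π) := {B | B ∈ M ∧ Nested A.val B.val} with hS
    obtain ⟨B0, hB0S, hB0min⟩ := Set.exists_min_image S
      (fun B => (mx B).val - (mn B).val) (Set.toFinite S) ⟨W, hM W hWo, hAW⟩
    refine ⟨B0, hB0S.1, hB0S.2, ?_⟩
    intro B hBM hAB
    rcases comparable hπ hB0S.2 hAB with h | h
    · exact h
    · have hlen := hB0min B ⟨hBM, hAB⟩
      rw [nested_iff] at h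
      have e1 : (mn B0).val ≤ (mn B).val := h.1
      have e2 : (mx B).val ≤ (mx B0).val := h.2
      have e3 : (mn B).val ≤ (mx B).val := mn_le_mx B
      have : B = B0 := eq_of_mn_eq (Fin.ext (by omega))
      rw [this]; exact nested_refl B0
  choose f hf1 hf2 hf3 using hmin
  have hfix : ∀ B ∈ M, f B = B := fun B hB =>
    nested_antisymm (hf3 B B hB (nested_refl B)) (hf2 B)
  refine ⟨⟨f, fun A => hfix (f A) (hf1 A),
      fun A B h => hf3 A (f B) (hf1 B) (nested_trans h (hf2 B)), hf2⟩, ?_, ?_⟩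
  · ext B
    constructor
    · rintro ⟨A, rfl⟩; exact hf1 A
    · intro hB; exact ⟨B, hfix B hB⟩
  · intro Ψ hΨ
    have hΨfix : ∀ B ∈ M, Ψ.toFun B = B := by
      intro B hB
      rw [← hΨ] at hB
      obtain ⟨C, rfl⟩ := hB
      exact Ψ.idem C
    apply ext'
    funext A
    apply nested_antisymm
    · have h := Ψ.mono A (f A) (hf2 A)
      rwa [hΨfix (f A) (hf1 A)] at h
    · have hm : Ψ.toFun A ∈ M := by rw [← hΨ]; exact ⟨A, rfl⟩
      exact hf3 A _ hm (Ψ.le_apply A)
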